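/- Suppose Σ is a collection of partial splits of X. If Σ is circular, then Σ is weakly compatible. -/

import Mathlib

/-!
Common definitions: partial splits of a finite set `X`, modelled as unordered
pairs (`Sym2`) of nonempty disjoint subsets of `X`; the `M`-, `Y`- and `Z`-
closure rules; weak compatibility; `X`-cycles and display; split closure
sequences and split closures.
-/

variable {X : Type*}

/-- `S` is a partial split of `X`: an unordered pair of nonempty disjoint subsets of `X`. -/
def IsPartialSplit (S : Sym2 (Set X)) : Prop :=
  ∃ A B : Set X, S = s(A, B) ∧ A.Nonempty ∧ B.Nonempty ∧ Disjoint A B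

/-- `S` is a full split of `X`: a partial split whose two parts cover `X`. -/
def IsFullSplit (S : Sym2 (Set X)) : Prop :=
  ∃ A B : Set X, S = s(A, B) ∧ A.Nonempty ∧ B.Nonempty ∧ Disjoint A B ∧ A ∪ B = Set.univ

/-- The partial split `S` extends the partial split `T`. -/
def SplitExtends (S T : Sym2 (Set X)) : Prop :=
  ∃ A B C D : Set X, S = s(A, B) ∧ T = s(C, D) ∧ C ⊆ A ∧ D ⊆ B

/-- `Sig ⪯ Sig'`: every partial split of `Sig` is extended by one of `Sig'`. -/
def Preceq (Sig Sig' : Set (Sym2 (Set X))) : Prop :=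
  ∀ S ∈ Sig, ∃ T ∈ Sig', SplitExtends T S

/-- `Sig⁻`: the set obtained from `Sig` by removing all redundant partial splits,
i.e. those extended by a different element of `Sig`. -/
def sreduce (Sig : Set (Sym2 (Set X))) : Set (Sym2 (Set X)) :=
  {S | S ∈ Sig ∧ ¬ ∃ T ∈ Sig, T ≠ S ∧ SplitExtends T S}

/-- `Sig ∈ P(X)`: `Sig` is an irreducible collection of partial splits of `X`. -/
def InPX (Sig : Set (Sym2 (Set X))) : Prop :=
  (∀ S ∈ Sig, IsPartialSplit S) ∧ sreduce Sig = Sig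

/-- Two partial splits are compatible if some part of one is disjoint from some part
of the other. -/
def SplitCompatible (S T : Sym2 (Set X)) : Prop :=
  ∃ A B C D : Set X, S = s(A, B) ∧ T = s(C, D) ∧ A ∩ C = ∅

/-- Weak compatibility of a (multi)triple of partial splits: for every choice of parts,
one of the four distinguished triple intersections is empty. -/
def WeaklyCompatTriple (S1 S2 S3 : Sym2 (Set X)) : Prop :=
  ∀ A1 B1 A2 B2 A3 B3 : Set X,
    S1 = s(A1, B1) → S2 = s(A2, B2) → S3 = s(A3, B3) →
    A1 ∩ A2 ∩ A3 = ∅ ∨ B1 ∩ B2 ∩ A3 = ∅ ∨ B1 ∩ A2 ∩ B3 = ∅ ∨ A1 ∩ B2 ∩ B3 = ∅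

/-- A collection of partial splits is weakly compatible if every three of its members are. -/
def WeaklyCompatible (Sig : Set (Sym2 (Set X))) : Prop :=
  ∀ S1 ∈ Sig, ∀ S2 ∈ Sig, ∀ S3 ∈ Sig, WeaklyCompatTriple S1 S2 S3

/-- Condition of the `M`-rule for the parts `A1|B1`, `A2|B2`. -/
def mCond (A1 B1 A2 B2 : Set X) : Prop :=
  (A1 ∩ A2).Nonempty ∧ (B1 ∩ B2).Nonempty

/-- Output of the `M`-rule applied with respect to the parts `A1|B1`, `A2|B2`. -/
def mOut (A1 B1 A2 B2 : Set X) : Set (Sym2 (Set X)) :=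
  {s(A1, B1), s(A2, B2), s(A1 ∩ A2, B1 ∪ B2), s(B1 ∩ B2, A1 ∪ A2)}

/-- Condition of the `Y`-rule for the parts `A1|B1`, `A2|B2`, `A3|B3`. -/
def yCond (A1 B1 A2 B2 A3 B3 : Set X) : Prop :=
  (A1 ∩ A2 ∩ A3).Nonempty ∧ (B1 ∩ B2 ∩ A3).Nonempty ∧
    (B1 ∩ A2 ∩ B3).Nonempty ∧ A1 ∩ B2 ∩ B3 = ∅

/-- Output of the `Y`-rule applied with respect to the parts `A1|B1`, `A2|B2`, `A3|B3`. -/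
def yOut (A1 B1 A2 B2 A3 B3 : Set X) : Set (Sym2 (Set X)) :=
  {s(B1 ∪ (B2 ∩ B3), A1), s(A2 ∪ (A1 ∩ B3), B2), s(A3 ∪ (A1 ∩ B2), B3)}

/-- Condition of the `Z`-rule for the parts `A1|B1`, `A2|B2`. -/
def zCond (A1 B1 A2 B2 : Set X) : Prop :=
  (A1 ∩ A2).Nonempty ∧ (A2 ∩ B1).Nonempty ∧ (B1 ∩ B2).Nonempty ∧ A1 ∩ B2 = ∅

/-- Output of the `Z`-rule applied with respect to the parts `A1|B1`, `A2|B2`. -/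
def zOut (A1 B1 A2 B2 : Set X) : Set (Sym2 (Set X)) :=
  {s(B1 ∪ B2, A1), s(B2, A1 ∪ A2)}

/-- `Sig'` is obtained from `Sig` by a single application of the `Y`-rule. -/
def yStep (Sig Sig' : Set (Sym2 (Set X))) : Prop :=
  ∃ A1 B1 A2 B2 A3 B3 : Set X,
    s(A1, B1) ∈ Sig ∧ s(A2, B2) ∈ Sig ∧ s(A3, B3) ∈ Sig ∧
    s(A1, B1) ≠ s(A2, B2) ∧ s(A1, B1) ≠ s(A3, B3) ∧ s(A2, B2) ≠ s(A3, B3) ∧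
    yCond A1 B1 A2 B2 A3 B3 ∧
    Sig' = sreduce (Sig ∪ yOut A1 B1 A2 B2 A3 B3)

/-- `Sig'` is obtained from `Sig` by a single application of the `M`-rule. -/
def mStep (Sig Sig' : Set (Sym2 (Set X))) : Prop :=
  ∃ A1 B1 A2 B2 : Set X,
    s(A1, B1) ∈ Sig ∧ s(A2, B2) ∈ Sig ∧ s(A1, B1) ≠ s(A2, B2) ∧
    mCond A1 B1 A2 B2 ∧
    Sig' = sreduce (Sig ∪ mOut A1 B1 A2 B2)

/-- `Sig'` is obtained from `Sig` by a single non-trivial application of the `Y`-rule. -/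
def yStepNT (Sig Sig' : Set (Sym2 (Set X))) : Prop :=
  ∃ A1 B1 A2 B2 A3 B3 : Set X,
    s(A1, B1) ∈ Sig ∧ s(A2, B2) ∈ Sig ∧ s(A3, B3) ∈ Sig ∧
    s(A1, B1) ≠ s(A2, B2) ∧ s(A1, B1) ≠ s(A3, B3) ∧ s(A2, B2) ≠ s(A3, B3) ∧
    yCond A1 B1 A2 B2 A3 B3 ∧
    ¬ Preceq (sreduce (yOut A1 B1 A2 B2 A3 B3)) Sig ∧
    Sig' = sreduce (Sig ∪ yOut A1 B1 A2 B2 A3 B3)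

/-- `Sig'` is obtained from `Sig` by a single non-trivial application of the `M`-rule. -/
def mStepNT (Sig Sig' : Set (Sym2 (Set X))) : Prop :=
  ∃ A1 B1 A2 B2 : Set X,
    s(A1, B1) ∈ Sig ∧ s(A2, B2) ∈ Sig ∧ s(A1, B1) ≠ s(A2, B2) ∧
    mCond A1 B1 A2 B2 ∧
    ¬ Preceq (sreduce (mOut A1 B1 A2 B2)) Sig ∧
    Sig' = sreduce (Sig ∪ mOut A1 B1 A2 B2)

/-- `Sig` is closed under the `Y`-rule: every application of the `Y`-rule to `Sig` is trivial. -/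
def yClosed (Sig : Set (Sym2 (Set X))) : Prop :=
  ∀ A1 B1 A2 B2 A3 B3 : Set X,
    s(A1, B1) ∈ Sig → s(A2, B2) ∈ Sig → s(A3, B3) ∈ Sig →
    s(A1, B1) ≠ s(A2, B2) → s(A1, B1) ≠ s(A3, B3) → s(A2, B2) ≠ s(A3, B3) →
    yCond A1 B1 A2 B2 A3 B3 →
    Preceq (sreduce (yOut A1 B1 A2 B2 A3 B3)) Sig

/-- `Sig` is closed under the `M`-rule: every application of the `M`-rule to `Sig` is trivial. -/
def mClosed (Sig : Set (Sym2 (Set X))) : Prop :=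
  ∀ A1 B1 A2 B2 : Set X,
    s(A1, B1) ∈ Sig → s(A2, B2) ∈ Sig → s(A1, B1) ≠ s(A2, B2) →
    mCond A1 B1 A2 B2 →
    Preceq (sreduce (mOut A1 B1 A2 B2)) Sig

/-- A split closure sequence for `Sig` of length `n` with respect to the property `P` and
the non-trivial single-application relation `stepNT`: a strictly `⪯`-increasing sequence
in `P(X)` starting at `Sig` in which every term satisfying `P` is followed by the result
of one non-trivial application of the rule. -/
def IsClosureSeq (P : Set (Sym2 (Set X)) → Prop)
    (stepNT : Set (Sym2 (Set X)) → Set (Sym2 (Set X)) → Prop)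
    (Sig : Set (Sym2 (Set X))) (n : ℕ) (f : ℕ → Set (Sym2 (Set X))) : Prop :=
  f 0 = Sig ∧ (∀ i ≤ n, InPX (f i)) ∧
    (∀ i < n, P (f i) ∧ stepNT (f i) (f (i + 1)) ∧
      Preceq (f i) (f (i + 1)) ∧ f i ≠ f (i + 1))

/-- `cl` is a split closure of `Sig` (with `cl = none` playing the role of `ω`):
the last element of a split closure sequence for `Sig`, which either satisfies `P` and is
closed under the rule, or fails `P`, in which case it is replaced by `ω`. -/
def IsSplitClosure (P : Set (Sym2 (Set X)) → Prop)
    (stepNT : Set (Sym2 (Set X)) → Set (Sym2 (Set X)) → Prop)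
    (closed : Set (Sym2 (Set X)) → Prop)
    (Sig : Set (Sym2 (Set X))) (cl : Option (Set (Sym2 (Set X)))) : Prop :=
  ∃ (n : ℕ) (f : ℕ → Set (Sym2 (Set X))),
    IsClosureSeq P stepNT Sig n f ∧
    ((P (f n) ∧ closed (f n) ∧ cl = some (f n)) ∨ (¬ P (f n) ∧ cl = none))

/-- Split closure with respect to the `Y`-rule, `(P)` being weak compatibility. -/
def IsYClosure (Sig : Set (Sym2 (Set X))) (cl : Option (Set (Sym2 (Set X)))) : Prop :=
  IsSplitClosure WeaklyCompatible yStepNT yClosed Sig cl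

/-- Split closure with respect to the `M`-rule, `(P)` holding for all collections. -/
def IsMClosure (Sig : Set (Sym2 (Set X))) (cl : Option (Set (Sym2 (Set X)))) : Prop :=
  IsSplitClosure (fun _ => True) mStepNT mClosed Sig cl

/-- Split closure with respect to the combined `M/Y`-rule, `(P)` being weak compatibility. -/
def IsMYClosure (Sig : Set (Sym2 (Set X))) (cl : Option (Set (Sym2 (Set X)))) : Prop :=
  IsSplitClosure WeaklyCompatible
    (fun s s' => mStepNT s s' ∨ yStepNT s s') (fun s => mClosed s ∧ yClosed s) Sig cl

/-- `C` is an `X`-cycle: a connected graph on the vertex set `X` (`|X| ≥ 3`) in which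
every vertex has degree `2`. -/
def IsXCycle (C : SimpleGraph X) : Prop :=
  C.Connected ∧ 3 ≤ Nat.card X ∧ ∀ v : X, (C.neighborSet v).ncard = 2

/-- The partial split `S` is displayed by the `X`-cycle `C`: there are two distinct
edges of `C` whose deletion leaves one component containing one part of `S` and
another component containing the other part. -/
def DisplaysSplit (C : SimpleGraph X) (S : Sym2 (Set X)) : Prop :=
  ∃ A B : Set X, S = s(A, B) ∧
    ∃ e1 e2 : Sym2 X, e1 ∈ C.edgeSet ∧ e2 ∈ C.edgeSet ∧ e1 ≠ e2 ∧
      ∃ c1 c2 : (C.deleteEdges {e1, e2}).ConnectedComponent,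
        c1 ≠ c2 ∧ A ⊆ c1.supp ∧ B ⊆ c2.supp

/-- A collection of partial splits is displayed by `C` if each of its members is. -/
def DisplaysColl (C : SimpleGraph X) (Sig : Set (Sym2 (Set X))) : Prop :=
  ∀ S ∈ Sig, DisplaysSplit C S

/-- `cl ≠ ω` and the underlying collection is displayed by `C`. -/
def OptionDisplays (C : SimpleGraph X) (cl : Option (Set (Sym2 (Set X)))) : Prop :=
  ∃ Sig, cl = some Sig ∧ DisplaysColl C Sig

/-- The ground set `A ∪ B` of a partial split `A|B`. -/
def splitGround (S : Sym2 (Set X)) : Set X :=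
  ⋃₀ {A : Set X | A ∈ S}

/-- Membership in `P_ω(X) = P(X) ∪ {ω}`. -/
def InPOmega (x : Option (Set (Sym2 (Set X)))) : Prop :=
  x = none ∨ ∃ Sig, x = some Sig ∧ InPX Sig

/-- The order `⪯` on `P_ω(X)`, with `Sig ⪯ ω` for all `Sig` and `ω ⪯ ω`. -/
def PreceqO (x y : Option (Set (Sym2 (Set X)))) : Prop :=
  y = none ∨ ∃ Sig Sig', x = some Sig ∧ y = some Sig' ∧ Preceq Sig Sig'

/-- Split closure as a relation on `P_ω(X)`, with `⟨ω⟩ = ω`. -/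
def ClosO (cls : Set (Sym2 (Set X)) → Option (Set (Sym2 (Set X))) → Prop)
    (x y : Option (Set (Sym2 (Set X)))) : Prop :=
  (x = none ∧ y = none) ∨ ∃ Sig, x = some Sig ∧ cls Sig y


namespace S4

noncomputable section
open Classical SimpleGraph

/-- The edge `e` straddles the set `U`. -/
def straddle (U : Set X) (e : Sym2 X) : Prop :=
  ¬ (Sym2.lift ⟨fun a b => (a ∈ U ↔ b ∈ U),
      fun a b => propext ⟨fun h => h.symm, fun h => h.symm⟩⟩ e)

@[simp] lemma straddle_mk (U : Set X) (a b : X) :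
    straddle U s(a, b) ↔ ¬ (a ∈ U ↔ b ∈ U) := by
  simp [straddle]

lemma not_straddle_mk {U : Set X} {a b : X} (h : ¬ straddle U s(a, b)) :
    a ∈ U ↔ b ∈ U := by
  rw [straddle_mk] at h; tauto

lemma straddle_exists {U : Set X} {e : Sym2 X} (h : straddle U e) :
    ∃ a b, e = s(a, b) ∧ a ∈ U ∧ b ∉ U := by
  induction e using Sym2.ind with
  | _ a b =>
    rw [straddle_mk] at h
    by_cases ha : a ∈ U
    · exact ⟨a, b, rfl, ha, fun hb => h ⟨fun _ => hb, fun _ => ha⟩⟩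
    · refine ⟨b, a, Sym2.eq_swap.symm, ?_, ha⟩
      by_contra hb; exact h ⟨fun h' => absurd h' ha, fun h' => absurd h' hb⟩

lemma straddle_inter {U V : Set X} {e : Sym2 X} (h : straddle (U ∩ V) e) :
    straddle U e ∨ straddle V e := by
  induction e using Sym2.ind with
  | _ a b =>
    rw [straddle_mk] at h
    rw [straddle_mk, straddle_mk]
    simp only [Set.mem_inter_iff] at h
    tauto

lemma straddle_compl {U : Set X} {e : Sym2 X} (h : straddle Uᶜ e) :
    straddle U e := by
  induction e using Sym2.ind with
  | _ a b =>
    rw [straddle_mk] at h ⊢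
    simp only [Set.mem_compl_iff] at h
    tauto

/-- Number of edges in the list straddling `U`. -/
def cnt (U : Set X) : List (Sym2 X) → ℕ
  | [] => 0
  | e :: l => cnt U l + (if straddle U e then 1 else 0)

lemma cnt_parity {G : SimpleGraph X} {u v : X} (p : G.Walk u v) (U : Set X) :
    Even (cnt U p.edges) ↔ (u ∈ U ↔ v ∈ U) := by
  induction p with
  | nil => simp [cnt]
  | @cons u a v h p ih =>
    rw [SimpleGraph.Walk.edges_cons]
    show Even (cnt U p.edges + _) ↔ _
    by_cases hs : straddle U s(u, a)
    · rw [if_pos hs, Nat.even_add_one, ih, straddle_mk] at *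
      tauto
    · rw [if_neg hs, Nat.add_zero, ih]
      have := not_straddle_mk hs
      tauto

lemma exists_of_odd {U : Set X} {l : List (Sym2 X)} (h : ¬ Even (cnt U l)) :
    ∃ e ∈ l, straddle U e := by
  induction l with
  | nil => simp [cnt] at h
  | cons e l ih =>
    by_cases hs : straddle U e
    · exact ⟨e, List.mem_cons_self .., hs⟩
    · show ∃ x ∈ e :: l, straddle U x
      have : cnt U (e :: l) = cnt U l := by simp [cnt, hs]
      rw [this] at h
      obtain ⟨a, ha, hsa⟩ := ih h
      exact ⟨a, List.mem_cons_of_mem _ ha, hsa⟩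

lemma cnt_pair {U : Set X} {g h : Sym2 X} (hgh : g ≠ h) :
    ∀ l : List (Sym2 X), l.Nodup → (∀ e ∈ l, straddle U e → e = g ∨ e = h) →
      cnt U l = (if g ∈ l ∧ straddle U g then 1 else 0)
        + (if h ∈ l ∧ straddle U h then 1 else 0) := by
  intro l
  induction l with
  | nil => simp [cnt]
  | cons a l ih =>
    intro hnd hb
    have hnd' := (List.nodup_cons.mp hnd).2
    have hal : a ∉ l := (List.nodup_cons.mp hnd).1
    have hb' : ∀ e ∈ l, straddle U e → e = g ∨ e = h :=
      fun e he hs => hb e (List.mem_cons_of_mem _ he) hs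
    have H := ih hnd' hb'
    show cnt U l + _ = _
    by_cases hs : straddle U a
    · rcases hb a (List.mem_cons_self ..) hs with rfl | rfl
      · rw [if_pos hs]
        have h1 : (a ∈ a :: l ∧ straddle U a) := ⟨List.mem_cons_self .., hs⟩
        rw [if_pos h1]
        have h3 : (h ∈ a :: l ∧ straddle U h) ↔ (h ∈ l ∧ straddle U h) := by
          constructor
          · rintro ⟨hm, hsh⟩
            rcases List.mem_cons.mp hm with hEq | hm'
            · exact absurd hEq.symm hgh
            · exact ⟨hm', hsh⟩
          · rintro ⟨hm, hsh⟩; exact ⟨List.mem_cons_of_mem _ hm, hsh⟩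
        rw [H, if_neg (show ¬(a ∈ l ∧ straddle U a) from fun hc => hal hc.1),
          if_congr h3 rfl rfl]
        try omega
      · rw [if_pos hs]
        have h1 : (a ∈ a :: l ∧ straddle U a) := ⟨List.mem_cons_self .., hs⟩
        rw [if_pos h1]
        have h3 : (g ∈ a :: l ∧ straddle U g) ↔ (g ∈ l ∧ straddle U g) := by
          constructor
          · rintro ⟨hm, hsg⟩
            rcases List.mem_cons.mp hm with hEq | hm'
            · exact absurd hEq hgh
            · exact ⟨hm', hsg⟩
          · rintro ⟨hm, hsg⟩; exact ⟨List.mem_cons_of_mem _ hm, hsg⟩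
        rw [H, if_neg (show ¬(a ∈ l ∧ straddle U a) from fun hc => hal hc.1),
          if_congr h3 rfl rfl]
        try omega
    · rw [if_neg hs, Nat.add_zero, H]
      have h3 : (g ∈ a :: l ∧ straddle U g) ↔ (g ∈ l ∧ straddle U g) := by
        constructor
        · rintro ⟨hm, hsg⟩
          rcases List.mem_cons.mp hm with rfl | hm'
          · exact absurd hsg hs
          · exact ⟨hm', hsg⟩
        · rintro ⟨hm, hsg⟩; exact ⟨List.mem_cons_of_mem _ hm, hsg⟩
      have h4 : (h ∈ a :: l ∧ straddle U h) ↔ (h ∈ l ∧ straddle U h) := by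
        constructor
        · rintro ⟨hm, hsh⟩
          rcases List.mem_cons.mp hm with rfl | hm'
          · exact absurd hsh hs
          · exact ⟨hm', hsh⟩
        · rintro ⟨hm, hsh⟩; exact ⟨List.mem_cons_of_mem _ hm, hsh⟩
      rw [if_congr h3 rfl rfl, if_congr h4 rfl rfl]

/-- From an odd crossing count, extract the unique straddling edge of the list. -/
lemma ext_lemma {U : Set X} {l : List (Sym2 X)} {E F : Sym2 X}
    (hnd : l.Nodup) (hb : ∀ e ∈ l, straddle U e → e = E ∨ e = F)
    (hodd : ¬ Even (cnt U l)) :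
    ∃ a, a ∈ l ∧ straddle U a ∧ ∀ e ∈ l, straddle U e → e = a := by
  obtain ⟨a, hal, has⟩ := exists_of_odd hodd
  refine ⟨a, hal, has, ?_⟩
  intro e hel hes
  by_contra hne
  have hane : a ≠ e := fun h => hne h.symm
  have hb' : ∀ e' ∈ l, straddle U e' → e' = a ∨ e' = e := by
    intro e' he' hs'
    rcases hb e' he' hs' with h0 | h0 <;>
      rcases hb a hal has with h1 | h1 <;>
      rcases hb e hel hes with h2 | h2 <;>
      first
        | (left; grind)
        | (right; grind)
        | (exact absurd (by grind : a = e) hane)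
  have := cnt_pair hane l hnd hb'
  rw [if_pos ⟨hal, has⟩, if_pos ⟨hel, hes⟩] at this
  rw [this] at hodd
  exact hodd (by norm_num)

/-- With two distinct specified candidate edges both on the list, parity
determines whether both or exactly one straddles. -/
lemma pair_parity {U : Set X} {l : List (Sym2 X)} {g h : Sym2 X}
    (hnd : l.Nodup) (hgh : g ≠ h) (hgl : g ∈ l) (hhl : h ∈ l)
    (hb : ∀ e ∈ l, straddle U e → e = g ∨ e = h) :
    (Even (cnt U l) ↔ (straddle U g ↔ straddle U h)) := by
  have H := cnt_pair hgh l hnd hb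
  by_cases h1 : straddle U g <;> by_cases h2 : straddle U h <;>
    simp only [h1, h2, and_true, and_false, if_pos, if_neg, hgl, hhl,
      if_true, if_false] at H <;>
    · rw [H]; simp [h1, h2]; try omega


lemma reachable_of_mem_support {G : SimpleGraph X} {u v w : X} (p : G.Walk u v)
    (h : w ∈ p.support) : G.Reachable u w := by
  induction p with
  | nil => rw [SimpleGraph.Walk.support_nil, List.mem_singleton] at h; exact h ▸ Reachable.refl _
  | @cons u a v hadj p ih =>
    rw [SimpleGraph.Walk.support_cons, List.mem_cons] at h
    rcases h with rfl | h
    · exact Reachable.refl _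
    · exact (hadj.reachable).trans (ih h)

/-- Any two vertices in the support of a connected component are joined by a
walk staying in the support, with no repeated edges. -/
lemma supp_conn {G : SimpleGraph X} {c : G.ConnectedComponent} {x z : X}
    (hx : x ∈ c.supp) (hz : z ∈ c.supp) :
    ∃ p : G.Walk x z, (∀ t ∈ p.support, t ∈ c.supp) ∧ p.edges.Nodup := by
  classical
  rw [SimpleGraph.ConnectedComponent.mem_supp_iff] at hx hz
  have hreach : G.Reachable x z := by
    rw [← SimpleGraph.ConnectedComponent.eq]; rw [hx, hz]
  obtain ⟨w⟩ := hreach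
  refine ⟨w.bypass, ?_, w.bypass_isPath.edges_nodup⟩
  intro t ht
  have : G.Reachable x t := reachable_of_mem_support _ ht
  rw [SimpleGraph.ConnectedComponent.mem_supp_iff, ← hx]
  exact (SimpleGraph.ConnectedComponent.eq).mpr this.symm

/-- A walk in `G.deleteEdges F` can be transferred to `G`. -/
lemma lift_walk {C : SimpleGraph X} {F : Set (Sym2 X)} {x z : X}
    (p : (C.deleteEdges F).Walk x z) :
    ∃ q : C.Walk x z, q.support = p.support ∧ q.edges = p.edges := by
  have hle : C.deleteEdges F ≤ C := SimpleGraph.deleteEdges_le F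
  have hsub : ∀ e ∈ p.edges, e ∈ C.edgeSet :=
    fun e he => SimpleGraph.edgeSet_mono hle (p.edges_subset_edgeSet he)
  exact ⟨p.transfer C hsub, p.support_transfer hsub, p.edges_transfer hsub⟩

/-- Any edge of `C` straddling the support of a component of `C.deleteEdges F`
belongs to `F`. -/
lemma straddle_mem_del {C : SimpleGraph X} {F : Set (Sym2 X)}
    (c : (C.deleteEdges F).ConnectedComponent) {e : Sym2 X}
    (he : e ∈ C.edgeSet) (hs : straddle c.supp e) : e ∈ F := by
  revert he hs
  induction e using Sym2.ind with
  | _ a b =>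
    intro he hs
    rw [SimpleGraph.mem_edgeSet] at he
    rw [straddle_mk] at hs
    by_contra heF
    have hadj : (C.deleteEdges F).Adj a b := by
      rw [SimpleGraph.deleteEdges_adj]; exact ⟨he, heF⟩
    have : (C.deleteEdges F).connectedComponentMk a
        = (C.deleteEdges F).connectedComponentMk b :=
      SimpleGraph.ConnectedComponent.eq.mpr hadj.reachable
    exact hs (by
      rw [SimpleGraph.ConnectedComponent.mem_supp_iff,
        SimpleGraph.ConnectedComponent.mem_supp_iff, this])

/-- The data extracted from a displayed split. -/
lemma goodPair_of_display {C : SimpleGraph X} {S : Sym2 (Set X)} {A B : Set X}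
    (hS : S = s(A, B)) (h : DisplaysSplit C S) :
    ∃ U V : Set X, A ⊆ U ∧ B ⊆ V ∧ Disjoint U V ∧
      (∃ E1 E2 : Sym2 X, ∀ e ∈ C.edgeSet, straddle U e → e = E1 ∨ e = E2) ∧
      (∀ x z, x ∈ U → z ∈ U →
        ∃ p : C.Walk x z, (∀ t ∈ p.support, t ∈ U) ∧ p.edges.Nodup) ∧
      (∀ y w, y ∈ V → w ∈ V →
        ∃ q : C.Walk y w, (∀ t ∈ q.support, t ∈ V) ∧ q.edges.Nodup) := by
  obtain ⟨A', B', hS', e1, e2, he1, he2, hne, c1, c2, hc12, hA', hB'⟩ := h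
  have hdisj' : ∀ (d d' : (C.deleteEdges {e1, e2}).ConnectedComponent),
      d ≠ d' → Disjoint d.supp d'.supp := by
    intro d d' hdd
    rw [Set.disjoint_left]
    intro a ha ha'
    rw [SimpleGraph.ConnectedComponent.mem_supp_iff] at ha ha'
    exact hdd (ha ▸ ha' ▸ rfl)
  have hbd : ∀ (d : (C.deleteEdges {e1, e2}).ConnectedComponent),
      ∀ e ∈ C.edgeSet, straddle d.supp e → e = e1 ∨ e = e2 := by
    intro d e he hs
    have := straddle_mem_del d he hs
    simpa using this
  have hconn : ∀ (d : (C.deleteEdges {e1, e2}).ConnectedComponent),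
      ∀ x z, x ∈ d.supp → z ∈ d.supp →
        ∃ p : C.Walk x z, (∀ t ∈ p.support, t ∈ d.supp) ∧ p.edges.Nodup := by
    intro d x z hx hz
    obtain ⟨p, hp1, hp2⟩ := supp_conn hx hz
    obtain ⟨q, hq1, hq2⟩ := lift_walk p
    exact ⟨q, fun t ht => hp1 t (hq1 ▸ ht), hq2 ▸ hp2⟩
  have := hS ▸ hS'
  rw [Sym2.eq_iff] at this
  rcases this with ⟨rfl, rfl⟩ | ⟨rfl, rfl⟩
  · exact ⟨c1.supp, c2.supp, hA', hB', hdisj' c1 c2 hc12,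
      ⟨e1, e2, hbd c1⟩, hconn c1, hconn c2⟩
  · exact ⟨c2.supp, c1.supp, hB', hA', hdisj' c2 c1 (Ne.symm hc12),
      ⟨e1, e2, hbd c2⟩, hconn c2, hconn c1⟩

lemma walk_edge_mem {G : SimpleGraph X} {u v : X} {p : G.Walk u v} {W : Set X}
    (hsup : ∀ t ∈ p.support, t ∈ W) {a b : X} (h : s(a, b) ∈ p.edges) :
    a ∈ W ∧ b ∈ W :=
  ⟨hsup a (p.fst_mem_support_of_mem_edges h), hsup b (p.snd_mem_support_of_mem_edges h)⟩

lemma pigeon {α : Type*} {g b1 b2 E1 E2 : α} (hg : g = E1 ∨ g = E2)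
    (h1 : b1 = E1 ∨ b1 = E2) (h2 : b2 = E1 ∨ b2 = E2) (hne : b1 ≠ b2) :
    g = b1 ∨ g = b2 := by
  rcases h1 with h1 | h1 <;> rcases h2 with h2 | h2
  · exact absurd (h1.trans h2.symm) hne
  · rcases hg with h | h
    · exact Or.inl (h.trans h1.symm)
    · exact Or.inr (h.trans h2.symm)
  · rcases hg with h | h
    · exact Or.inr (h.trans h2.symm)
    · exact Or.inl (h.trans h1.symm)
  · exact absurd (h1.trans h2.symm) hne

end
end S4


/-- a circular collection of partial splits of `X` is weakly compatible. -/
theorem statement4 {X : Type*} [Fintype X] (Sig : Set (Sym2 (Set X)))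
    (hSig : ∀ S ∈ Sig, IsPartialSplit S)
    (hcirc : ∃ C : SimpleGraph X, IsXCycle C ∧ DisplaysColl C Sig) :
    WeaklyCompatible Sig := by
  intro S1 hS1m S2 hS2m S3 hS3m
  intro A1 B1 A2 B2 A3 B3 h1 h2 h3
  by_contra hcon
  push_neg at hcon
  obtain ⟨hne1, hne2, hne3, hne4⟩ := hcon
  obtain ⟨x, hx⟩ := hne1
  obtain ⟨y, hy⟩ := hne2
  obtain ⟨z, hz⟩ := hne3
  obtain ⟨w, hw⟩ := hne4
  obtain ⟨C, -, hdisp⟩ := hcirc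
  obtain ⟨U1, V1, hAU1, hBV1, hdj1, ⟨E11, E12, hbd1⟩, hcu1, hcv1⟩ :=
    S4.goodPair_of_display h1 (hdisp S1 hS1m)
  obtain ⟨U2, V2, hAU2, hBV2, hdj2, ⟨E21, E22, hbd2⟩, hcu2, hcv2⟩ :=
    S4.goodPair_of_display h2 (hdisp S2 hS2m)
  obtain ⟨U3, V3, hAU3, hBV3, hdj3, ⟨E31, E32, hbd3⟩, hcu3, hcv3⟩ :=
    S4.goodPair_of_display h3 (hdisp S3 hS3m)
  -- memberships of the four points
  have hxU1 : x ∈ U1 := hAU1 hx.1.1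
  have hxU2 : x ∈ U2 := hAU2 hx.1.2
  have hxU3 : x ∈ U3 := hAU3 hx.2
  have hyV1 : y ∈ V1 := hBV1 hy.1.1
  have hyV2 : y ∈ V2 := hBV2 hy.1.2
  have hyU3 : y ∈ U3 := hAU3 hy.2
  have hzV1 : z ∈ V1 := hBV1 hz.1.1
  have hzU2 : z ∈ U2 := hAU2 hz.1.2
  have hzV3 : z ∈ V3 := hBV3 hz.2
  have hwU1 : w ∈ U1 := hAU1 hw.1.1
  have hwV2 : w ∈ V2 := hBV2 hw.1.2
  have hwV3 : w ∈ V3 := hBV3 hw.2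
  have hyU2 : y ∉ U2 := fun h => Set.disjoint_left.mp hdj2 h hyV2
  have hwU2 : w ∉ U2 := fun h => Set.disjoint_left.mp hdj2 h hwV2
  have hzU3 : z ∉ U3 := fun h => Set.disjoint_left.mp hdj3 h hzV3
  have hwU3 : w ∉ U3 := fun h => Set.disjoint_left.mp hdj3 h hwV3
  -- the six walks
  obtain ⟨wp, hpsup, hpnd⟩ := hcu1 x w hxU1 hwU1
  obtain ⟨wq, hqsup, hqnd⟩ := hcv1 y z hyV1 hzV1
  obtain ⟨wr, hrsup, hrnd⟩ := hcu2 x z hxU2 hzU2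
  obtain ⟨ws, hssup, hsnd⟩ := hcv2 y w hyV2 hwV2
  obtain ⟨wt, htsup, htnd⟩ := hcu3 x y hxU3 hyU3
  obtain ⟨wv, hvsup, hvnd⟩ := hcv3 z w hzV3 hwV3
  -- crossing edges, via the extraction lemma
  have hoddp2 : ¬ Even (S4.cnt U2 wp.edges) := by
    rw [S4.cnt_parity]; intro hiff; exact hwU2 (hiff.mp hxU2)
  obtain ⟨ap, hapm, haps, hapu⟩ := S4.ext_lemma hpnd
    (fun e he hs => hbd2 e (wp.edges_subset_edgeSet he) hs) hoddp2
  have hoddp3 : ¬ Even (S4.cnt U3 wp.edges) := by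
    rw [S4.cnt_parity]; intro hiff; exact hwU3 (hiff.mp hxU3)
  obtain ⟨bp, hbpm, hbps, hbpu⟩ := S4.ext_lemma hpnd
    (fun e he hs => hbd3 e (wp.edges_subset_edgeSet he) hs) hoddp3
  have hoddq2 : ¬ Even (S4.cnt U2 wq.edges) := by
    rw [S4.cnt_parity]; intro hiff; exact hyU2 (hiff.mpr hzU2)
  obtain ⟨aq, haqm, haqs, haqu⟩ := S4.ext_lemma hqnd
    (fun e he hs => hbd2 e (wq.edges_subset_edgeSet he) hs) hoddq2
  have hoddq3 : ¬ Even (S4.cnt U3 wq.edges) := by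
    rw [S4.cnt_parity]; intro hiff; exact hzU3 (hiff.mp hyU3)
  obtain ⟨bq, hbqm, hbqs, hbqu⟩ := S4.ext_lemma hqnd
    (fun e he hs => hbd3 e (wq.edges_subset_edgeSet he) hs) hoddq3
  have hoddr3 : ¬ Even (S4.cnt U3 wr.edges) := by
    rw [S4.cnt_parity]; intro hiff; exact hzU3 (hiff.mp hxU3)
  obtain ⟨gr, hgrm, hgrs, -⟩ := S4.ext_lemma hrnd
    (fun e he hs => hbd3 e (wr.edges_subset_edgeSet he) hs) hoddr3
  have hodds3 : ¬ Even (S4.cnt U3 ws.edges) := by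
    rw [S4.cnt_parity]; intro hiff; exact hwU3 (hiff.mp hyU3)
  obtain ⟨gs, hgsm, hgss, -⟩ := S4.ext_lemma hsnd
    (fun e he hs => hbd3 e (ws.edges_subset_edgeSet he) hs) hodds3
  have hoddt2 : ¬ Even (S4.cnt U2 wt.edges) := by
    rw [S4.cnt_parity]; intro hiff; exact hyU2 (hiff.mp hxU2)
  obtain ⟨gt', hgtm, hgts, -⟩ := S4.ext_lemma htnd
    (fun e he hs => hbd2 e (wt.edges_subset_edgeSet he) hs) hoddt2
  have hoddv2 : ¬ Even (S4.cnt U2 wv.edges) := by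
    rw [S4.cnt_parity]; intro hiff; exact hwU2 (hiff.mp hzU2)
  obtain ⟨gv, hgvm, hgvs, -⟩ := S4.ext_lemma hvnd
    (fun e he hs => hbd2 e (wv.edges_subset_edgeSet he) hs) hoddv2
  -- representations of the four crossing edges
  obtain ⟨m2, n2, hapEq, hm2, hn2⟩ := S4.straddle_exists haps
  obtain ⟨m3, n3, hbpEq, hm3, hn3⟩ := S4.straddle_exists hbps
  obtain ⟨k2, l2, haqEq, hk2, hl2⟩ := S4.straddle_exists haqs
  obtain ⟨k3, l3, hbqEq, hk3, hl3⟩ := S4.straddle_exists hbqs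
  -- p and q are vertex-disjoint, hence the crossing edges differ
  have hpq_a : ap ≠ aq := by
    intro hEq
    have hm : s(m2, n2) ∈ wq.edges := by rw [← hapEq, hEq]; exact haqm
    have h1' : m2 ∈ U1 := (S4.walk_edge_mem hpsup (hapEq ▸ hapm)).1
    have h2' : m2 ∈ V1 := (S4.walk_edge_mem hqsup hm).1
    exact Set.disjoint_left.mp hdj1 h1' h2'
  have hpq_b : bp ≠ bq := by
    intro hEq
    have hm : s(m3, n3) ∈ wq.edges := by rw [← hbpEq, hEq]; exact hbqm
    have h1' : m3 ∈ U1 := (S4.walk_edge_mem hpsup (hbpEq ▸ hbpm)).1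
    have h2' : m3 ∈ V1 := (S4.walk_edge_mem hqsup hm).1
    exact Set.disjoint_left.mp hdj1 h1' h2'
  -- the crossing edges of r, s, t, v coincide with those of p, q
  have hgrmem : gr = bp ∨ gr = bq :=
    S4.pigeon (hbd3 gr (wr.edges_subset_edgeSet hgrm) hgrs)
      (hbd3 bp (wp.edges_subset_edgeSet hbpm) hbps)
      (hbd3 bq (wq.edges_subset_edgeSet hbqm) hbqs) hpq_b
  have hgsmem : gs = bp ∨ gs = bq :=
    S4.pigeon (hbd3 gs (ws.edges_subset_edgeSet hgsm) hgss)
      (hbd3 bp (wp.edges_subset_edgeSet hbpm) hbps)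
      (hbd3 bq (wq.edges_subset_edgeSet hbqm) hbqs) hpq_b
  have hgtmem : gt' = ap ∨ gt' = aq :=
    S4.pigeon (hbd2 gt' (wt.edges_subset_edgeSet hgtm) hgts)
      (hbd2 ap (wp.edges_subset_edgeSet hapm) haps)
      (hbd2 aq (wq.edges_subset_edgeSet haqm) haqs) hpq_a
  have hgvmem : gv = ap ∨ gv = aq :=
    S4.pigeon (hbd2 gv (wv.edges_subset_edgeSet hgvm) hgvs)
      (hbd2 ap (wp.edges_subset_edgeSet hapm) haps)
      (hbd2 aq (wq.edges_subset_edgeSet haqm) haqs) hpq_a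
  by_cases hc1 : ap = bp <;> by_cases hc2 : aq = bq
  · -- both p and q cross at a single edge
    rcases hgrmem with hEq | hEq
    · have hm : s(m2, n2) ∈ wr.edges := by rw [← hapEq, hc1, ← hEq]; exact hgrm
      exact hn2 ((S4.walk_edge_mem hrsup hm).2)
    · have hm : s(k2, l2) ∈ wr.edges := by rw [← haqEq, hc2, ← hEq]; exact hgrm
      exact hl2 ((S4.walk_edge_mem hrsup hm).2)
  · -- p crosses at a single edge, q at two distinct edges
    rcases hgrmem with hEq | hEq
    · have hm : s(m2, n2) ∈ wr.edges := by rw [← hapEq, hc1, ← hEq]; exact hgrm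
      exact hn2 ((S4.walk_edge_mem hrsup hm).2)
    · have hm : s(k3, l3) ∈ wr.edges := by rw [← hbqEq, ← hEq]; exact hgrm
      have hk3U2 : k3 ∈ U2 := (S4.walk_edge_mem hrsup hm).1
      rcases hgsmem with hEq' | hEq'
      · have hm' : s(m2, n2) ∈ ws.edges := by rw [← hapEq, hc1, ← hEq']; exact hgsm
        have : m2 ∈ V2 := (S4.walk_edge_mem hssup hm').1
        exact Set.disjoint_left.mp hdj2 hm2 this
      · have hm' : s(k3, l3) ∈ ws.edges := by rw [← hbqEq, ← hEq']; exact hgsm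
        have : k3 ∈ V2 := (S4.walk_edge_mem hssup hm').1
        exact Set.disjoint_left.mp hdj2 hk3U2 this
  · -- q crosses at a single edge, p at two distinct edges
    rcases hgrmem with hEq | hEq
    · have hm : s(m3, n3) ∈ wr.edges := by rw [← hbpEq, ← hEq]; exact hgrm
      have hm3U2 : m3 ∈ U2 := (S4.walk_edge_mem hrsup hm).1
      rcases hgsmem with hEq' | hEq'
      · have hm' : s(m3, n3) ∈ ws.edges := by rw [← hbpEq, ← hEq']; exact hgsm
        have : m3 ∈ V2 := (S4.walk_edge_mem hssup hm').1
        exact Set.disjoint_left.mp hdj2 hm3U2 this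
      · have hm' : s(k2, l2) ∈ ws.edges := by rw [← haqEq, hc2, ← hEq']; exact hgsm
        have : k2 ∈ V2 := (S4.walk_edge_mem hssup hm').1
        exact Set.disjoint_left.mp hdj2 hk2 this
    · have hm : s(k2, l2) ∈ wr.edges := by rw [← haqEq, hc2, ← hEq]; exact hgrm
      exact hl2 ((S4.walk_edge_mem hrsup hm).2)
  · -- main case: all four crossing edges distinct
    -- the respective other set is not straddled
    have hiff_ap3 : m2 ∈ U3 ↔ n2 ∈ U3 := by
      have : ¬ S4.straddle U3 s(m2, n2) := by
        rw [← hapEq]; exact fun hs => hc1 (hbpu ap hapm hs)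
      exact S4.not_straddle_mk this
    have hiff_bp2 : m3 ∈ U2 ↔ n3 ∈ U2 := by
      have : ¬ S4.straddle U2 s(m3, n3) := by
        rw [← hbpEq]; exact fun hs => hc1 ((hapu bp hbpm hs).symm)
      exact S4.not_straddle_mk this
    have hiff_aq3 : k2 ∈ U3 ↔ l2 ∈ U3 := by
      have : ¬ S4.straddle U3 s(k2, l2) := by
        rw [← haqEq]; exact fun hs => hc2 (hbqu aq haqm hs)
      exact S4.not_straddle_mk this
    have hiff_bq2 : k3 ∈ U2 ↔ l3 ∈ U2 := by
      have : ¬ S4.straddle U2 s(k3, l3) := by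
        rw [← hbqEq]; exact fun hs => hc2 ((haqu bq hbqm hs).symm)
      exact S4.not_straddle_mk this
    -- parity of crossings of U2 ∩ U3 along p (odd) and q (even)
    have hbndP_p : ∀ e ∈ wp.edges, S4.straddle (U2 ∩ U3) e → e = ap ∨ e = bp :=
      fun e he hs => (S4.straddle_inter hs).imp (hapu e he) (hbpu e he)
    have hbndP_q : ∀ e ∈ wq.edges, S4.straddle (U2 ∩ U3) e → e = aq ∨ e = bq :=
      fun e he hs => (S4.straddle_inter hs).imp (haqu e he) (hbqu e he)
    have hoddP : ¬ Even (S4.cnt (U2 ∩ U3) wp.edges) := by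
      rw [S4.cnt_parity]; intro hiff; exact hwU2 (hiff.mp ⟨hxU2, hxU3⟩).1
    have hevenP : Even (S4.cnt (U2 ∩ U3) wq.edges) := by
      rw [S4.cnt_parity]
      constructor
      · intro hyP; exact absurd hyP.1 hyU2
      · intro hzP; exact absurd hzP.2 hzU3
    have hF1 : ¬ (S4.straddle (U2 ∩ U3) ap ↔ S4.straddle (U2 ∩ U3) bp) :=
      fun h => hoddP ((S4.pair_parity hpnd hc1 hapm hbpm hbndP_p).mpr h)
    have hF2 : S4.straddle (U2 ∩ U3) aq ↔ S4.straddle (U2 ∩ U3) bq :=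
      (S4.pair_parity hqnd hc2 haqm hbqm hbndP_q).mp hevenP
    -- translate straddling of the intersection into the four key propositions
    have sap : S4.straddle (U2 ∩ U3) ap ↔ m2 ∈ U3 := by
      rw [hapEq, S4.straddle_mk]
      simp only [Set.mem_inter_iff]
      constructor
      · intro hstr
        by_contra hm2U3
        exact hstr ⟨fun hh => absurd hh.2 hm2U3, fun hh => absurd hh.1 hn2⟩
      · intro hm2U3 hiff
        exact hn2 (hiff.mp ⟨hm2, hm2U3⟩).1
    have sbp : S4.straddle (U2 ∩ U3) bp ↔ m3 ∈ U2 := by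
      rw [hbpEq, S4.straddle_mk]
      simp only [Set.mem_inter_iff]
      constructor
      · intro hstr
        by_contra hB
        exact hstr ⟨fun hh => absurd hh.1 hB, fun hh => absurd hh.2 hn3⟩
      · intro hB hiff
        exact hn3 (hiff.mp ⟨hB, hm3⟩).2
    have saq : S4.straddle (U2 ∩ U3) aq ↔ k2 ∈ U3 := by
      rw [haqEq, S4.straddle_mk]
      simp only [Set.mem_inter_iff]
      constructor
      · intro hstr
        by_contra hk2U3
        exact hstr ⟨fun hh => absurd hh.2 hk2U3, fun hh => absurd hh.1 hl2⟩
      · intro hk2U3 hiff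
        exact hl2 (hiff.mp ⟨hk2, hk2U3⟩).1
    have sbq : S4.straddle (U2 ∩ U3) bq ↔ k3 ∈ U2 := by
      rw [hbqEq, S4.straddle_mk]
      simp only [Set.mem_inter_iff]
      constructor
      · intro hstr
        by_contra hB
        exact hstr ⟨fun hh => absurd hh.1 hB, fun hh => absurd hh.2 hl3⟩
      · intro hB hiff
        exact hl3 (hiff.mp ⟨hB, hk3⟩).2
    have hG1 : ¬ (m2 ∈ U3 ↔ m3 ∈ U2) := by rw [← sap, ← sbp]; exact hF1
    have hG2 : (k2 ∈ U3 ↔ k3 ∈ U2) := by rw [← saq, ← sbq]; exact hF2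
    -- constraints from r, s, t, v
    have hG3 : m3 ∈ U2 ∨ k3 ∈ U2 := by
      rcases hgrmem with hEq | hEq
      · have hm : s(m3, n3) ∈ wr.edges := by rw [← hbpEq, ← hEq]; exact hgrm
        exact Or.inl (S4.walk_edge_mem hrsup hm).1
      · have hm : s(k3, l3) ∈ wr.edges := by rw [← hbqEq, ← hEq]; exact hgrm
        exact Or.inr (S4.walk_edge_mem hrsup hm).1
    have hG4 : m3 ∉ U2 ∨ k3 ∉ U2 := by
      rcases hgsmem with hEq | hEq
      · have hm : s(m3, n3) ∈ ws.edges := by rw [← hbpEq, ← hEq]; exact hgsm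
        exact Or.inl fun hh =>
          Set.disjoint_left.mp hdj2 hh (S4.walk_edge_mem hssup hm).1
      · have hm : s(k3, l3) ∈ ws.edges := by rw [← hbqEq, ← hEq]; exact hgsm
        exact Or.inr fun hh =>
          Set.disjoint_left.mp hdj2 hh (S4.walk_edge_mem hssup hm).1
    have hG5 : m2 ∈ U3 ∨ k2 ∈ U3 := by
      rcases hgtmem with hEq | hEq
      · have hm : s(m2, n2) ∈ wt.edges := by rw [← hapEq, ← hEq]; exact hgtm
        exact Or.inl (S4.walk_edge_mem htsup hm).1
      · have hm : s(k2, l2) ∈ wt.edges := by rw [← haqEq, ← hEq]; exact hgtm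
        exact Or.inr (S4.walk_edge_mem htsup hm).1
    have hG6 : m2 ∉ U3 ∨ k2 ∉ U3 := by
      rcases hgvmem with hEq | hEq
      · have hm : s(m2, n2) ∈ wv.edges := by rw [← hapEq, ← hEq]; exact hgvm
        exact Or.inl fun hh =>
          Set.disjoint_left.mp hdj3 hh (S4.walk_edge_mem hvsup hm).1
      · have hm : s(k2, l2) ∈ wv.edges := by rw [← haqEq, ← hEq]; exact hgvm
        exact Or.inr fun hh =>
          Set.disjoint_left.mp hdj3 hh (S4.walk_edge_mem hvsup hm).1
    by_cases hPA : m2 ∈ U3 <;> by_cases hPB : m3 ∈ U2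
    · exact hG1 (iff_of_true hPA hPB)
    · have hPD : k3 ∈ U2 := hG3.resolve_left hPB
      have hPG : k2 ∈ U3 := hG2.mpr hPD
      rcases hG6 with h | h
      · exact h hPA
      · exact h hPG
    · rcases hG4 with h | h
      · exact h hPB
      · have hPG : k2 ∉ U3 := fun hg => h (hG2.mp hg)
        rcases hG5 with h5 | h5
        · exact hPA h5
        · exact hPG h5
    · exact hG1 (iff_of_false hPA hPB)
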